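/- Let $n, m \geq 1$ and let $t_1, \ldots, t_n$ be positive integers with each $t_i \leq m$. Suppose players are ordered so that $\pi_1 \geq \pi_2 \geq \cdots \geq \pi_n$ where $\pi_i = v_i / t_i$ for nonnegative reals $v_i$. Let $\mathcal{R} = \max_{i \in [n]} \pi_i \sum_{i' \leq i} t_{i'}$. Then $\sum_{i=1}^n v_i \leq \mathcal{R} \cdot H_{nm}$, where $H_k = \sum_{j=1}^k 1/j$ is the $k$-th harmonic number. -/

import Mathlib

/-- The k-th harmonicSum number H_k = ∑_{j=1}^k 1/j. -/
noncomputable def harmonicSum (k : ℕ) : ℝ := ∑ j ∈ Finset.range k, (1 : ℝ) / (j + 1)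

/-- Single-price scheme: total value is at most H_{nm} times the best single-price revenue. -/
theorem single_price_harmonicSum_bound (n m : ℕ) (hn : 1 ≤ n) (hm : 1 ≤ m)
    (t : Fin n → ℕ) (ht : ∀ i, 1 ≤ t i) (htm : ∀ i, t i ≤ m)
    (v : Fin n → ℝ) (hv : ∀ i, 0 ≤ v i)
    (hsort : ∀ i j : Fin n, i ≤ j → v j / (t j : ℝ) ≤ v i / (t i : ℝ))
    (hne : (Finset.univ : Finset (Fin n)).Nonempty)
    (R : ℝ)
    (hR : R = Finset.univ.sup' hne
      (fun i => v i / (t i : ℝ) *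
        ∑ i' ∈ Finset.univ.filter (fun i' => i' ≤ i), (t i' : ℝ))) :
    ∑ i, v i ≤ R * harmonicSum (n * m) := by
  classical
  set T : Fin n → ℕ := fun i => ∑ i' ∈ Finset.univ.filter (fun i' => i' ≤ i), t i' with hT
  have htT : ∀ i, t i ≤ T i := by
    intro i
    exact Finset.single_le_sum (f := t) (fun _ _ => Nat.zero_le _) (by simp)
  have hTpos : ∀ i, 0 < T i := fun i => lt_of_lt_of_le (ht i) (htT i)
  have hTnm : ∀ i, T i ≤ n * m := by
    intro i
    calc T i ≤ ∑ i' : Fin n, t i' :=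
          Finset.sum_le_sum_of_subset (Finset.filter_subset _ _)
      _ ≤ ∑ _i' : Fin n, m := Finset.sum_le_sum (fun i' _ => htm i')
      _ = n * m := by simp [Finset.sum_const, Finset.card_univ]
  have hTsub : ∀ i, T i - t i = ∑ i' ∈ Finset.univ.filter (fun i' => i' < i), t i' := by
    intro i
    have hins : (Finset.univ.filter (fun i' => i' ≤ i))
        = insert i (Finset.univ.filter (fun i' => i' < i)) := by
      ext x
      simp [le_iff_lt_or_eq, or_comm]
    have : T i = t i + ∑ i' ∈ Finset.univ.filter (fun i' => i' < i), t i' := by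
      rw [hT]
      simp only
      rw [hins, Finset.sum_insert (by simp)]
    omega
  -- disjointness of the blocks
  have hdisj : ∀ i ∈ (Finset.univ : Finset (Fin n)), ∀ j ∈ (Finset.univ : Finset (Fin n)),
      i ≠ j → Disjoint (Finset.Ico (T i - t i) (T i)) (Finset.Ico (T j - t j) (T j)) := by
    have key : ∀ i j : Fin n, i < j → T i ≤ T j - t j := by
      intro i j hij
      rw [hTsub j, hT]
      exact Finset.sum_le_sum_of_subset (by
        intro x hx
        simp only [Finset.mem_filter, Finset.mem_univ, true_and] at hx ⊢
        exact lt_of_le_of_lt hx hij)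
    intro i _ j _ hij
    rcases lt_or_gt_of_ne hij with h | h
    · refine Finset.disjoint_left.mpr ?_
      intro k hk hk'
      simp only [Finset.mem_Ico] at hk hk'
      have := key i j h
      omega
    · refine Finset.disjoint_left.mpr ?_
      intro k hk hk'
      simp only [Finset.mem_Ico] at hk hk'
      have := key j i h
      omega
  have hR0 : 0 ≤ R := by
    have ⟨i₀, _⟩ := hne
    have h1 : v i₀ / (t i₀ : ℝ) *
        ∑ i' ∈ Finset.univ.filter (fun i' => i' ≤ i₀), (t i' : ℝ) ≤ R := by
      rw [hR]
      exact Finset.le_sup' (fun i => v i / (t i : ℝ) *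
        ∑ i' ∈ Finset.univ.filter (fun i' => i' ≤ i), (t i' : ℝ)) (Finset.mem_univ i₀)
    refine le_trans ?_ h1
    apply mul_nonneg
    · apply div_nonneg (hv i₀) (Nat.cast_nonneg _)
    · exact Finset.sum_nonneg (fun _ _ => Nat.cast_nonneg _)
  -- per-player bound
  have hkey : ∀ i : Fin n,
      v i ≤ R * ∑ j ∈ Finset.Ico (T i - t i) (T i), (1 : ℝ) / (j + 1) := by
    intro i
    have htpos : (0 : ℝ) < (t i : ℝ) := by exact_mod_cast ht i
    have hTposR : (0 : ℝ) < (T i : ℝ) := by exact_mod_cast hTpos i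
    have hπR : v i / (t i : ℝ) * (T i : ℝ) ≤ R := by
      have h := Finset.le_sup' (α := ℝ) (fun i => v i / (t i : ℝ) *
        ∑ i' ∈ Finset.univ.filter (fun i' => i' ≤ i), (t i' : ℝ)) (Finset.mem_univ i)
      rw [hR]
      refine le_trans (le_of_eq ?_) h
      rw [hT]
      push_cast
      rfl
    have hsum : (t i : ℝ) / (T i : ℝ) ≤
        ∑ j ∈ Finset.Ico (T i - t i) (T i), (1 : ℝ) / (j + 1) := by
      have hcard : (Finset.Ico (T i - t i) (T i)).card = t i := by
        rw [Nat.card_Ico]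
        have := htT i
        omega
      calc (t i : ℝ) / (T i : ℝ)
          = (Finset.Ico (T i - t i) (T i)).card * ((1 : ℝ) / (T i : ℝ)) := by
            rw [hcard]; ring
        _ = ∑ _j ∈ Finset.Ico (T i - t i) (T i), (1 : ℝ) / (T i : ℝ) := by
            rw [Finset.sum_const, nsmul_eq_mul]
        _ ≤ ∑ j ∈ Finset.Ico (T i - t i) (T i), (1 : ℝ) / (j + 1) := by
            apply Finset.sum_le_sum
            intro j hj
            simp only [Finset.mem_Ico] at hj
            apply one_div_le_one_div_of_le
            · positivity
            · have : j + 1 ≤ T i := hj.2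
              exact_mod_cast this
    calc v i = (v i / (t i : ℝ) * (T i : ℝ)) * ((t i : ℝ) / (T i : ℝ)) := by
          field_simp
      _ ≤ R * ((t i : ℝ) / (T i : ℝ)) := by
          apply mul_le_mul_of_nonneg_right hπR
          positivity
      _ ≤ R * ∑ j ∈ Finset.Ico (T i - t i) (T i), (1 : ℝ) / (j + 1) :=
          mul_le_mul_of_nonneg_left hsum hR0
  calc ∑ i, v i
      ≤ ∑ i, R * ∑ j ∈ Finset.Ico (T i - t i) (T i), (1 : ℝ) / (j + 1) :=
        Finset.sum_le_sum (fun i _ => hkey i)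
    _ = R * ∑ i, ∑ j ∈ Finset.Ico (T i - t i) (T i), (1 : ℝ) / (j + 1) := by
        rw [Finset.mul_sum]
    _ = R * ∑ j ∈ Finset.univ.biUnion (fun i => Finset.Ico (T i - t i) (T i)),
          (1 : ℝ) / (j + 1) := by
        rw [Finset.sum_biUnion hdisj]
    _ ≤ R * harmonicSum (n * m) := by
        apply mul_le_mul_of_nonneg_left _ hR0
        unfold harmonicSum
        apply Finset.sum_le_sum_of_subset_of_nonneg
        · intro j hj
          simp only [Finset.mem_biUnion, Finset.mem_Ico] at hj
          obtain ⟨i, _, _, hji⟩ := hj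
          exact Finset.mem_range.mpr (lt_of_lt_of_le hji (hTnm i))
        · intro j _ _
          positivity
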